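/- Suppose the M-grading of R = MvPolynomial (Fin N) ℂ is pointed, let I, J ⊆ R be M-graded ideals, and let m ∈ M. Then D_0^m(I ∩ J) = D_0^m(I) + D_0^m(J): an M-homogeneous polynomial q of degree m satisfies λ_q(f) = 0 for all f ∈ I ∩ J if and only if q = p_1 + p_2 for some M-homogeneous p_1, p_2 of degree m with λ_{p_1} vanishing on I and λ_{p_2} vanishing on J. -/

import Mathlib

open MvPolynomial

/-- The Macaulay pairing `λ_p(f) = ∑_α coeff(α,p) * coeff(α,f)`, as a linear functional. -/
noncomputable def lam {N : ℕ} (p : MvPolynomial (Fin N) ℂ) :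
    MvPolynomial (Fin N) ℂ →ₗ[ℂ] ℂ where
  toFun f := ∑ α ∈ p.support, coeff α p * coeff α f
  map_add' f g := by simp [mul_add, Finset.sum_add_distrib]
  map_smul' c f := by
    simp [MvPolynomial.coeff_smul, Finset.mul_sum, mul_left_comm]

/-- An ideal is `M`-graded if it is generated by a set of `M`-homogeneous polynomials. -/
def IsMGraded {N : ℕ} {M : Type*} [AddCommGroup M] (w : Fin N → M)
    (I : Ideal (MvPolynomial (Fin N) ℂ)) : Prop :=
  ∃ S : Set (MvPolynomial (Fin N) ℂ),
    (∀ s ∈ S, ∃ m : M, s.IsWeightedHomogeneous w m) ∧ I = Ideal.span S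

namespace MacaulayAux

variable {N : ℕ}

lemma lam_apply (p f : MvPolynomial (Fin N) ℂ) :
    lam p f = ∑ α ∈ p.support, coeff α p * coeff α f := rfl

lemma lam_eq_sum {p : MvPolynomial (Fin N) ℂ} {s : Finset (Fin N →₀ ℕ)}
    (h : p.support ⊆ s) (f : MvPolynomial (Fin N) ℂ) :
    lam p f = ∑ α ∈ s, coeff α p * coeff α f := by
  rw [lam_apply]
  exact Finset.sum_subset h (fun α _ hα => by
    rw [notMem_support_iff.mp hα, zero_mul])

lemma lam_add_left (p q f : MvPolynomial (Fin N) ℂ) :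
    lam (p + q) f = lam p f + lam q f := by
  rw [lam_eq_sum (s := p.support ∪ q.support) (support_add ..),
    lam_eq_sum (s := p.support ∪ q.support) Finset.subset_union_left,
    lam_eq_sum (s := p.support ∪ q.support) Finset.subset_union_right,
    ← Finset.sum_add_distrib]
  simp [coeff_add, add_mul]

lemma lam_smul_left (c : ℂ) (p f : MvPolynomial (Fin N) ℂ) :
    lam (c • p) f = c * lam p f := by
  rw [lam_eq_sum (s := p.support) (support_smul), lam_apply, Finset.mul_sum]
  simp [coeff_smul, mul_assoc]

/-- `lam` as a bilinear map. -/
noncomputable def lamL : MvPolynomial (Fin N) ℂ →ₗ[ℂ] (MvPolynomial (Fin N) ℂ →ₗ[ℂ] ℂ) where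
  toFun := lam
  map_add' p q := LinearMap.ext fun f => lam_add_left p q f
  map_smul' c p := LinearMap.ext fun f => lam_smul_left c p f

lemma lam_monomial_right (p : MvPolynomial (Fin N) ℂ) (α : Fin N →₀ ℕ) :
    lam p (monomial α 1) = coeff α p := by
  rw [lam_apply]
  simp only [coeff_monomial, mul_ite, mul_one, mul_zero]
  rw [Finset.sum_ite_eq p.support α (fun β => coeff β p)]
  split_ifs with h
  · rfl
  · exact (notMem_support_iff.mp h).symm

lemma lam_monomial_left (f : MvPolynomial (Fin N) ℂ) (α : Fin N →₀ ℕ) :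
    lam (monomial α 1) f = coeff α f := by
  rw [lam_apply, support_monomial]
  simp [coeff_monomial]

variable {M : Type*} [AddCommGroup M] (w : Fin N → M)

lemma lam_component {m : M} {p : MvPolynomial (Fin N) ℂ}
    (hp : p.IsWeightedHomogeneous w m) [DecidableEq M] (f : MvPolynomial (Fin N) ℂ) :
    lam p f = lam p (weightedHomogeneousComponent w m f) := by
  rw [lam_apply, lam_apply]
  refine Finset.sum_congr rfl fun α hα => ?_
  rw [coeff_weightedHomogeneousComponent, if_pos (hp (mem_support_iff.mp hα))]

lemma comp_mem [DecidableEq M] (I : Ideal (MvPolynomial (Fin N) ℂ))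
    (hI : IsMGraded w I)
    {f : MvPolynomial (Fin N) ℂ} (hf : f ∈ I) (m : M) :
    weightedHomogeneousComponent w m f ∈ I := by
  obtain ⟨S, hS, rfl⟩ := hI
  letI : GradedAlgebra (weightedHomogeneousSubmodule ℂ w) := weightedGradedAlgebra ℂ w
  have h := Ideal.homogeneous_span (weightedHomogeneousSubmodule ℂ w) S
    (fun s hs => by
      obtain ⟨n, hn⟩ := hS s hs
      exact ⟨n, (mem_weightedHomogeneousSubmodule ℂ w n s).mpr hn⟩)
  have := h m hf
  rwa [show ((DirectSum.decompose (weightedHomogeneousSubmodule ℂ w) f m :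
      MvPolynomial (Fin N) ℂ)) = weightedHomogeneousComponent w m f from
      MvPolynomial.decompose'_apply ℂ w f m] at this

lemma fd (hpointed : ∀ m : M, {α : Fin N →₀ ℕ | Finsupp.weight w α = m}.Finite) (m : M) :
    FiniteDimensional ℂ (weightedHomogeneousSubmodule ℂ w m) := by
  set A := (hpointed m).toFinset
  have hle : weightedHomogeneousSubmodule ℂ w m ≤
      Submodule.span ℂ ((fun α : Fin N →₀ ℕ => (monomial α (1:ℂ))) '' A) := by
    intro p hp
    rw [mem_weightedHomogeneousSubmodule] at hp
    rw [p.as_sum]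
    refine Submodule.sum_mem _ fun α hα => ?_
    have hmem : (monomial α (1:ℂ)) ∈ ((fun α : Fin N →₀ ℕ => (monomial α (1:ℂ))) '' A) :=
      ⟨α, by simp [A, Set.Finite.mem_toFinset, hp (mem_support_iff.mp hα)], rfl⟩
    have h2 : monomial α (coeff α p) = (coeff α p) • monomial α (1:ℂ) := by
      rw [smul_monomial, smul_eq_mul, mul_one]
    rw [h2]
    exact Submodule.smul_mem _ _ (Submodule.subset_span hmem)
  have : FiniteDimensional ℂ (Submodule.span ℂ ((fun α : Fin N →₀ ℕ => (monomial α (1:ℂ))) '' A)) :=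
    FiniteDimensional.span_of_finite ℂ ((A.finite_toSet).image _)
  exact Submodule.finiteDimensional_of_le hle

end MacaulayAux

open MacaulayAux

/-- **Cor. 4.2(3)**: for a pointed `M`-grading, `M`-graded ideals `I, J`, and `m ∈ M`,
`D_0^m(I ∩ J) = D_0^m(I) + D_0^m(J)`: an `M`-homogeneous `q` of degree `m` satisfies
`λ_q(f) = 0` for all `f ∈ I ∩ J` iff `q = p₁ + p₂` for some `M`-homogeneous `p₁, p₂` of
degree `m` with `λ_{p₁}` vanishing on `I` and `λ_{p₂}` vanishing on `J`. -/
theorem dualSpace_inter_eq_sum {N : ℕ} {M : Type*} [AddCommGroup M] (w : Fin N → M)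
    (hpointed : ∀ m : M, {α : Fin N →₀ ℕ | Finsupp.weight w α = m}.Finite)
    (I J : Ideal (MvPolynomial (Fin N) ℂ)) (hI : IsMGraded w I) (hJ : IsMGraded w J)
    (m : M) (q : MvPolynomial (Fin N) ℂ) (hq : q.IsWeightedHomogeneous w m) :
    (∀ f ∈ I ⊓ J, lam q f = 0) ↔
      ∃ p₁ p₂ : MvPolynomial (Fin N) ℂ,
        p₁.IsWeightedHomogeneous w m ∧ p₂.IsWeightedHomogeneous w m ∧
        (∀ f ∈ I, lam p₁ f = 0) ∧ (∀ f ∈ J, lam p₂ f = 0) ∧ q = p₁ + p₂ := by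
  classical
  constructor
  · intro h
    set V := weightedHomogeneousSubmodule ℂ w m with hV
    haveI : FiniteDimensional ℂ V := fd w hpointed m
    set B : LinearMap.BilinForm ℂ V := lamL.compl₁₂ V.subtype V.subtype with hB
    have hBapp : ∀ p f : V, B p f = lam p.1 f.1 := fun p f => rfl
    -- nondegeneracy
    have hnd : B.Nondegenerate := by
      apply LinearMap.BilinForm.Nondegenerate.ofSeparatingLeft
      intro p hp
      apply Subtype.ext
      apply MvPolynomial.ext
      intro α
      simp only [ZeroMemClass.coe_zero, coeff_zero]
      by_cases hα : Finsupp.weight w α = m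
      · have hm : (monomial α (1:ℂ)) ∈ V :=
          (mem_weightedHomogeneousSubmodule ℂ w m _).mpr
            (isWeightedHomogeneous_monomial w α 1 hα)
        have := hp ⟨monomial α 1, hm⟩
        rwa [hBapp, lam_monomial_right] at this
      · by_contra hc
        exact hα ((mem_weightedHomogeneousSubmodule ℂ w m _).mp p.2 hc)
    set e := B.toDual hnd with he
    have heapp : ∀ p f : V, e p f = lam p.1 f.1 := fun p f => rfl
    -- the subspaces
    set UI : Submodule ℂ V := Submodule.comap V.subtype (I.restrictScalars ℂ) with hUI
    set UJ : Submodule ℂ V := Submodule.comap V.subtype (J.restrictScalars ℂ) with hUJ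
    have hqV : q ∈ V := (mem_weightedHomogeneousSubmodule ℂ w m q).mpr hq
    have hmemann : e ⟨q, hqV⟩ ∈ (UI ⊓ UJ).dualAnnihilator := by
      rw [Submodule.mem_dualAnnihilator]
      intro f hfm
      rw [Submodule.mem_inf] at hfm
      exact h f.1 (Submodule.mem_inf.mpr ⟨hfm.1, hfm.2⟩)
    rw [Subspace.dualAnnihilator_inf_eq, Submodule.mem_sup] at hmemann
    obtain ⟨φ₁, hφ₁, φ₂, hφ₂, hsum⟩ := hmemann
    refine ⟨(e.symm φ₁).1, (e.symm φ₂).1,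
      (mem_weightedHomogeneousSubmodule ℂ w m _).mp (e.symm φ₁).2,
      (mem_weightedHomogeneousSubmodule ℂ w m _).mp (e.symm φ₂).2, ?_, ?_, ?_⟩
    · intro f hf
      rw [lam_component w ((mem_weightedHomogeneousSubmodule ℂ w m _).mp (e.symm φ₁).2) f]
      have hfV : weightedHomogeneousComponent w m f ∈ V :=
        weightedHomogeneousComponent_mem w f m
      have hfI : (⟨weightedHomogeneousComponent w m f, hfV⟩ : V) ∈ UI :=
        comp_mem w I hI hf m
      have := (Submodule.mem_dualAnnihilator φ₁).mp hφ₁ _ hfI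
      rw [← this, ← heapp (e.symm φ₁) ⟨weightedHomogeneousComponent w m f, hfV⟩,
        LinearEquiv.apply_symm_apply]
    · intro f hf
      rw [lam_component w ((mem_weightedHomogeneousSubmodule ℂ w m _).mp (e.symm φ₂).2) f]
      have hfV : weightedHomogeneousComponent w m f ∈ V :=
        weightedHomogeneousComponent_mem w f m
      have hfJ : (⟨weightedHomogeneousComponent w m f, hfV⟩ : V) ∈ UJ :=
        comp_mem w J hJ hf m
      have := (Submodule.mem_dualAnnihilator φ₂).mp hφ₂ _ hfJ
      rw [← this, ← heapp (e.symm φ₂) ⟨weightedHomogeneousComponent w m f, hfV⟩,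
        LinearEquiv.apply_symm_apply]
    · have : (⟨q, hqV⟩ : V) = e.symm φ₁ + e.symm φ₂ := by
        apply e.injective
        rw [map_add, LinearEquiv.apply_symm_apply, LinearEquiv.apply_symm_apply, hsum]
      calc q = ((⟨q, hqV⟩ : V) : MvPolynomial (Fin N) ℂ) := rfl
        _ = (e.symm φ₁).1 + (e.symm φ₂).1 := by rw [this]; rfl
  · rintro ⟨p₁, p₂, _, _, h₁, h₂, rfl⟩
    intro f hf
    rw [Submodule.mem_inf] at hf
    rw [lam_add_left, h₁ f hf.1, h₂ f hf.2, add_zero]
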